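/- Let T ∈ B(X) be a power bounded operator on a reflexive complex Banach space X, and let x ∈ X satisfy ‖T^{n+1}x − Tⁿx‖ → 0 as n → ∞. Then the sequence {Tⁿx} converges strongly in X. -/

import Mathlib

open Filter Topology Metric

lemma sep_lemma' {X : Type*} [NormedAddCommGroup X] [NormedSpace ℂ X]
    (M : Submodule ℂ X) (hM : IsClosed (M : Set X)) {z : X} (hz : z ∉ M) :
    ∃ f : X →L[ℂ] ℂ, (∀ m ∈ M, f m = 0) ∧ f z ≠ 0 := by
  haveI : IsClosed (M : Set X) := hM
  have hq : ∀ m : X, ‖M.mkQ m‖ ≤ 1 * ‖m‖ := fun m => by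
    simpa using Submodule.Quotient.norm_mk_le M m
  let Q : X →L[ℂ] X ⧸ M := LinearMap.mkContinuous M.mkQ 1 hq
  have hQapp : ∀ m : X, Q m = Submodule.Quotient.mk m := fun m => rfl
  have hzQ : Q z ≠ 0 := by
    rw [hQapp, Ne, Submodule.Quotient.mk_eq_zero]
    exact hz
  obtain ⟨g, hg1, hgz⟩ := exists_dual_vector ℂ (Q z) (norm_ne_zero_iff.mpr hzQ)
  refine ⟨g.comp Q, fun m hm => ?_, ?_⟩
  · have : Q m = 0 := by rw [hQapp, Submodule.Quotient.mk_eq_zero]; exact hm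
    simp [this]
  · simp only [ContinuousLinearMap.comp_apply, hgz]
    simpa using norm_ne_zero_iff.mpr hzQ

lemma cluster_eq_lim {α : Type*} {s : ℕ → α} [TopologicalSpace α] [T2Space α] {a b : α}
    (hs : Tendsto s atTop (𝓝 a)) (hb : ClusterPt b (map s atTop)) : b = a :=
  eq_of_nhds_neBot (hb.mono hs)

/-- **Lemma 4.3 (b).** Let `T ∈ B(X)` be power bounded on a reflexive Banach space `X`
and `x ∈ X` with `‖T^{n+1}x − Tⁿx‖ → 0`. Then the sequence `{Tⁿx}` converges strongly. -/
theorem stmt_13 {X : Type*} [NormedAddCommGroup X] [NormedSpace ℂ X] [CompleteSpace X]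
    (hrefl : Function.Surjective (NormedSpace.inclusionInDoubleDual ℂ X))
    (T : X →L[ℂ] X) (hpb : ∃ C : ℝ, ∀ n : ℕ, ‖T ^ n‖ ≤ C)
    (x : X) (hdiff : Tendsto (fun n : ℕ => ‖(T ^ (n + 1)) x - (T ^ n) x‖) atTop (𝓝 0)) :
    ∃ y : X, Tendsto (fun n : ℕ => (T ^ n) x) atTop (𝓝 y) := by
  classical
  obtain ⟨C, hC⟩ := hpb
  set C0 : ℝ := max C 1 with hC0def
  have hC0pos : 0 < C0 := lt_of_lt_of_le one_pos (le_max_right _ _)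
  have hC0 : ∀ n : ℕ, ‖T ^ n‖ ≤ C0 := fun n => (hC n).trans (le_max_left _ _)
  set u : ℕ → X := fun n => (T ^ n) x with hu
  have hbu : ∀ n, ‖u n‖ ≤ C0 * ‖x‖ := fun n =>
    ((T ^ n).le_opNorm x).trans (by gcongr; exact hC0 n)
  -- the subspace M
  set gen : ℕ → X := fun k => (T ^ k) x - (T ^ (k + 1)) x with hgen
  set M : Submodule ℂ X := (Submodule.span ℂ (Set.range gen)).topologicalClosure with hM
  have hMclosed : IsClosed (M : Set X) :=
    (Submodule.span ℂ (Set.range gen)).isClosed_topologicalClosure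
  -- every element of the span is sent to 0 by T^n
  have hgen_tendsto : ∀ v ∈ Submodule.span ℂ (Set.range gen),
      Tendsto (fun n : ℕ => (T ^ n) v) atTop (𝓝 0) := by
    intro v hv
    induction hv using Submodule.span_induction with
    | mem v hv =>
        obtain ⟨k, rfl⟩ := hv
        have h1 : Tendsto (fun n : ℕ => ‖(T ^ (n + k + 1)) x - (T ^ (n + k)) x‖) atTop (𝓝 0) :=
          hdiff.comp (tendsto_add_atTop_nat k)
        rw [tendsto_zero_iff_norm_tendsto_zero]
        have e : (fun n : ℕ => ‖(T ^ n) (gen k)‖)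
            = fun n : ℕ => ‖(T ^ (n + k + 1)) x - (T ^ (n + k)) x‖ := by
          funext n
          have e1 : (T ^ n) (gen k) = (T ^ (n + k)) x - (T ^ (n + k + 1)) x := by
            simp only [hgen, map_sub, ← ContinuousLinearMap.mul_apply, ← pow_add]
            ring_nf
          rw [e1, norm_sub_rev]
        rw [e]; exact h1
    | zero => simpa using (tendsto_const_nhds : Tendsto (fun _ : ℕ => (0 : X)) atTop (𝓝 0))
    | add a b _ _ ha hb => simpa using ha.add hb
    | smul c a _ ha => simpa using ha.const_smul c
  -- every element of M is sent to 0 by T^n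
  have hMtendsto : ∀ v ∈ M, Tendsto (fun n : ℕ => (T ^ n) v) atTop (𝓝 0) := by
    intro v hv
    have hv' : v ∈ closure ((Submodule.span ℂ (Set.range gen)) : Set X) := hv
    rw [NormedAddCommGroup.tendsto_atTop]
    intro ε hε
    obtain ⟨w, hw, hvw⟩ := Metric.mem_closure_iff.mp hv' (ε / (2 * C0)) (by positivity)
    have hw' := hgen_tendsto w hw
    rw [NormedAddCommGroup.tendsto_atTop] at hw'
    obtain ⟨N, hN⟩ := hw' (ε / 2) (by positivity)
    refine ⟨N, fun n hn => ?_⟩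
    have h1 : ‖(T ^ n) v - (T ^ n) w‖ ≤ C0 * ‖v - w‖ := by
      rw [← map_sub]
      exact ((T ^ n).le_opNorm _).trans (by gcongr; exact hC0 n)
    have h2 : ‖v - w‖ < ε / (2 * C0) := by rwa [← dist_eq_norm]
    have h3 : ‖(T ^ n) w - 0‖ < ε / 2 := hN n hn
    have key : C0 * ‖v - w‖ + ε / 2 < ε := by
      have hlt : C0 * ‖v - w‖ < C0 * (ε / (2 * C0)) := by gcongr
      have heq : C0 * (ε / (2 * C0)) = ε / 2 := by
        field_simp
      linarith
    calc ‖(T ^ n) v - 0‖ = ‖((T ^ n) v - (T ^ n) w) + ((T ^ n) w - 0)‖ := by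
          congr 1; abel
      _ ≤ ‖(T ^ n) v - (T ^ n) w‖ + ‖(T ^ n) w - 0‖ := norm_add_le _ _
      _ ≤ C0 * ‖v - w‖ + ε / 2 := by
          have := h3.le
          gcongr
      _ < ε := by
          have hlt : C0 * ‖v - w‖ < C0 * (ε / (2 * C0)) := by gcongr
          have heq : C0 * (ε / (2 * C0)) = ε / 2 := by
            field_simp
          linarith
  -- weak-* cluster point in the double dual
  set J := NormedSpace.inclusionInDoubleDual ℂ X with hJ
  set v : ℕ → WeakDual ℂ (StrongDual ℂ X) :=
    fun n => StrongDual.toWeakDual (J (u n)) with hv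
  have hvK : ∀ n, v n ∈ WeakDual.toStrongDual ⁻¹' closedBall 0 (C0 * ‖x‖) := fun n => by
    simp only [Set.mem_preimage, mem_closedBall, dist_zero_right]
    calc dist (WeakDual.toStrongDual (v n)) 0 = ‖WeakDual.toStrongDual (v n)‖ := dist_zero_right (E := StrongDual ℂ (StrongDual ℂ X)) _
      _ = ‖J (u n)‖ := rfl
      _ ≤ ‖u n‖ := NormedSpace.double_dual_bound ℂ X (u n)
      _ ≤ C0 * ‖x‖ := hbu n
  haveI : (map v atTop).NeBot := map_neBot
  obtain ⟨y'', hy''K, hy''⟩ :=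
    (WeakDual.isCompact_closedBall (𝕜 := ℂ) (E := StrongDual ℂ X) 0
      (C0 * ‖x‖)).exists_clusterPt (f := map v atTop)
      (le_principal_iff.mpr (mem_map.mpr (Filter.Eventually.of_forall hvK)))
  obtain ⟨y, hy⟩ := hrefl (WeakDual.toStrongDual y'')
  have hyf : ∀ f : StrongDual ℂ X, y'' f = f y := by
    intro f
    have : (J y) f = f y := rfl
    rw [← this, hy]; rfl
  -- cluster points under continuous evaluations
  have hclφ : ∀ φ : WeakDual ℂ (StrongDual ℂ X) → ℂ, Continuous φ →
      ClusterPt (φ y'') (map (fun n => φ (v n)) atTop) := by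
    intro φ hφ
    have hmm : map φ (map v atTop) = map (fun n => φ (v n)) atTop := by
      rw [Filter.map_map]; rfl
    have hT : Tendsto φ (map v atTop) (map (fun n => φ (v n)) atTop) := by
      rw [← hmm]; exact tendsto_map
    exact hy''.map hφ.continuousAt hT
  -- step 1 : T y = y
  have hTy : T y = y := by
    apply NormedSpace.eq_iff_forall_dual_eq ℂ |>.mpr
    intro f
    have hφc : Continuous fun z : WeakDual ℂ (StrongDual ℂ X) => z (f.comp T) - z f :=
      (WeakDual.eval_continuous (f.comp T)).sub (WeakDual.eval_continuous f)
    have hcl := hclφ _ hφc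
    have hseq : Tendsto (fun n => (v n) (f.comp T) - (v n) f) atTop (𝓝 0) := by
      have h0 : Tendsto (fun n : ℕ => u (n + 1) - u n) atTop (𝓝 0) :=
        tendsto_zero_iff_norm_tendsto_zero.mpr hdiff
      have h1 : Tendsto (fun n : ℕ => f (u (n + 1) - u n)) atTop (𝓝 (f 0)) :=
        (f.continuous.tendsto 0).comp h0
      rw [map_zero] at h1
      have e : (fun n => (v n) (f.comp T) - (v n) f) = fun n : ℕ => f (u (n + 1) - u n) := by
        funext n
        have e1 : (v n) (f.comp T) = f (T (u n)) := rfl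
        have e2 : (v n) f = f (u n) := rfl
        have e3 : T (u n) = u (n + 1) := by
          simp only [hu, ← ContinuousLinearMap.mul_apply, ← pow_succ']
        rw [e1, e2, e3, map_sub]
      rw [e]; exact h1
    have := cluster_eq_lim hseq hcl
    rw [hyf, hyf] at this
    have : f (T y) - f y = 0 := this
    have := sub_eq_zero.mp this
    simpa using this
  -- step 2 : x - y ∈ M
  have hxyM : x - y ∈ M := by
    by_contra hxy
    obtain ⟨f, hfM, hfxy⟩ := sep_lemma' M hMclosed hxy
    have hxu : ∀ n, x - u n ∈ Submodule.span ℂ (Set.range gen) := by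
      intro n
      induction n with
      | zero =>
          have : x - u 0 = 0 := by simp [hu]
          rw [this]; exact zero_mem _
      | succ n ih =>
          have e : x - u (n + 1) = (x - u n) + gen n := by
            have : gen n = u n - u (n + 1) := rfl
            rw [this]; abel
          rw [e]
          exact add_mem ih (Submodule.subset_span ⟨n, rfl⟩)
    have hfconst : ∀ n, f (u n) = f x := by
      intro n
      have h0 := hfM _ ((Submodule.span ℂ (Set.range gen)).le_topologicalClosure (hxu n))
      rw [map_sub, sub_eq_zero] at h0
      exact h0.symm
    have hclf := hclφ (fun z => z f) (WeakDual.eval_continuous f)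
    have hseq : Tendsto (fun n => (v n) f) atTop (𝓝 (f x)) := by
      have e : (fun n => (v n) f) = fun n => f x := funext fun n => hfconst n
      rw [e]; exact tendsto_const_nhds
    have h1 : y'' f = f x := cluster_eq_lim hseq hclf
    rw [hyf] at h1
    apply hfxy
    rw [map_sub, h1, sub_self]
  -- conclusion
  have h1 : Tendsto (fun n : ℕ => (T ^ n) (x - y)) atTop (𝓝 0) := hMtendsto _ hxyM
  have hTny : ∀ n : ℕ, (T ^ n) y = y := by
    intro n
    induction n with
    | zero => simp
    | succ n ih => rw [pow_succ, ContinuousLinearMap.mul_apply, hTy, ih]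
  refine ⟨y, ?_⟩
  have e : u = fun n : ℕ => (T ^ n) (x - y) + y := by
    funext n
    show (T ^ n) x = (T ^ n) (x - y) + y
    rw [map_sub, hTny n]; abel
  show Tendsto u atTop (𝓝 y)
  rw [e]
  simpa using h1.add (tendsto_const_nhds : Tendsto (fun _ : ℕ => y) atTop (𝓝 y))
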